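/- Let M be an n×n real symmetric matrix with eigenpair (λ, φ) where φ has no zero entries. Let D_φ be the diagonal matrix with diagonal φ. Then B = D_φ (M - λI) D_φ is a symmetric matrix with zero row sums, and if λ has index k and multiplicity r among the eigenvalues of M, then B has exactly k-1 negative eigenvalues and n-k-r+1 positive eigenvalues. -/

import Mathlib

open Matrix Finset Module

variable {n : ℕ}

/-- Vectors vanishing on a finset of coordinates. -/
noncomputable def zeroSet (s : Finset (Fin n)) : Submodule ℝ (Fin n → ℝ) :=
  LinearMap.ker (LinearMap.funLeft ℝ ℝ ((↑) : s → Fin n))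

lemma mem_zeroSet {s : Finset (Fin n)} {x : Fin n → ℝ} :
    x ∈ zeroSet s ↔ ∀ i ∈ s, x i = 0 := by
  simp only [zeroSet, LinearMap.mem_ker, funext_iff, LinearMap.funLeft_apply,
    Function.comp, Pi.zero_apply]
  constructor
  · intro h i hi; exact h ⟨i, hi⟩
  · intro h j; exact h j j.2

lemma finrank_zeroSet (s : Finset (Fin n)) : finrank ℝ (zeroSet s) = n - s.card := by
  have hsurj : Function.Surjective (LinearMap.funLeft ℝ ℝ ((↑) : s → Fin n)) :=
    LinearMap.funLeft_surjective_of_injective _ _ _ Subtype.val_injective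
  have h := LinearMap.finrank_range_add_finrank_ker (LinearMap.funLeft ℝ ℝ ((↑) : s → Fin n))
  rw [LinearMap.range_eq_top.2 hsurj, finrank_top, Module.finrank_fintype_fun_eq_card,
    Module.finrank_fin_fun, Fintype.card_coe] at h
  show finrank ℝ ↥(LinearMap.ker (LinearMap.funLeft ℝ ℝ ((↑) : s → Fin n))) = n - s.card
  omega

/-- If a subspace is positive definite for the diagonal form `∑ d i * x i ^ 2`, then its
dimension is at most the number of positive `d i`. -/
lemma finrank_le_cardPos (d : Fin n → ℝ) (P : Submodule ℝ (Fin n → ℝ))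
    (hP : ∀ x ∈ P, x ≠ 0 → 0 < ∑ i, d i * x i ^ 2) :
    finrank ℝ P ≤ (Finset.univ.filter (fun i => 0 < d i)).card := by
  classical
  set s : Finset (Fin n) := Finset.univ.filter (fun i => 0 < d i) with hs
  by_contra hcon
  push_neg at hcon
  set N := zeroSet s with hN
  have hcard : s.card ≤ n := le_trans (Finset.card_le_univ s) (by simp)
  have h1 := Submodule.finrank_sup_add_finrank_inf_eq P N
  have h2 : finrank ℝ ↥(P ⊔ N) ≤ n := by
    simpa [Module.finrank_fin_fun] using Submodule.finrank_le (P ⊔ N)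
  have h3 : finrank ℝ N = n - s.card := finrank_zeroSet s
  have hpos : 0 < finrank ℝ ↥(P ⊓ N) := by omega
  have : Nontrivial ↥(P ⊓ N) := Module.finrank_pos_iff.mp hpos
  obtain ⟨x, hx⟩ := exists_ne (0 : ↥(P ⊓ N))
  have hxP : (x : Fin n → ℝ) ∈ P := x.2.1
  have hxN : (x : Fin n → ℝ) ∈ N := x.2.2
  have hx0 : (x : Fin n → ℝ) ≠ 0 := fun h => hx (Subtype.ext h)
  have hgt : 0 < ∑ i, d i * (x : Fin n → ℝ) i ^ 2 := hP _ hxP hx0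
  have hle : ∑ i, d i * (x : Fin n → ℝ) i ^ 2 ≤ 0 := by
    apply Finset.sum_nonpos
    intro i _
    by_cases hi : 0 < d i
    · have : (x : Fin n → ℝ) i = 0 := mem_zeroSet.mp hxN i (by simpa [hs] using hi)
      simp [this]
    · push_neg at hi
      exact mul_nonpos_of_nonpos_of_nonneg hi (sq_nonneg _)
  linarith

lemma quadform_congr (X C : Matrix (Fin n) (Fin n) ℝ) (x : Fin n → ℝ) :
    x ⬝ᵥ (Cᵀ * X * C).mulVec x = (C.mulVec x) ⬝ᵥ X.mulVec (C.mulVec x) := by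
  rw [← mulVec_mulVec, ← mulVec_mulVec, dotProduct_mulVec, vecMul_transpose]

lemma quadform_diagonal (d : Fin n → ℝ) (x : Fin n → ℝ) :
    x ⬝ᵥ (diagonal d).mulVec x = ∑ i, d i * x i ^ 2 := by
  simp [dotProduct, mulVec_diagonal]
  congr 1; ext i; ring

/-- The linear equivalence given by an invertible matrix. -/
noncomputable def mulVecEquiv (C : Matrix (Fin n) (Fin n) ℝ) (hC : IsUnit C.det) :
    (Fin n → ℝ) ≃ₗ[ℝ] (Fin n → ℝ) :=
  LinearEquiv.ofLinear C.mulVecLin (C⁻¹).mulVecLin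
    (by rw [← Matrix.mulVecLin_mul, Matrix.mul_nonsing_inv _ hC, Matrix.mulVecLin_one])
    (by rw [← Matrix.mulVecLin_mul, Matrix.nonsing_inv_mul _ hC, Matrix.mulVecLin_one])

lemma cardPos_le_of_congr (d e : Fin n → ℝ) (C : Matrix (Fin n) (Fin n) ℝ)
    (hC : IsUnit C.det) (h : diagonal e = Cᵀ * diagonal d * C) :
    (Finset.univ.filter (fun i => 0 < d i)).card ≤
      (Finset.univ.filter (fun i => 0 < e i)).card := by
  classical
  set s : Finset (Fin n) := Finset.univ.filter (fun i => ¬ 0 < d i) with hs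
  set eqv := mulVecEquiv C hC with heqv
  set P : Submodule ℝ (Fin n → ℝ) := Submodule.comap eqv.toLinearMap (zeroSet s) with hP
  have hdim : finrank ℝ P = (Finset.univ.filter (fun i => 0 < d i)).card := by
    rw [hP, Submodule.comap_equiv_eq_map_symm, LinearEquiv.finrank_map_eq, finrank_zeroSet]
    have := Finset.card_filter_add_card_filter_not (s := Finset.univ)
      (p := fun i : Fin n => 0 < d i)
    simp only [Finset.card_univ, Fintype.card_fin] at this
    have hss : s.card = (Finset.univ.filter (fun i : Fin n => ¬ 0 < d i)).card :=
      congrArg Finset.card hs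
    have hcard : s.card ≤ n := le_trans (Finset.card_le_univ s) (by simp)
    omega
  have hQ : ∀ x ∈ P, x ≠ 0 → 0 < ∑ i, e i * x i ^ 2 := by
    intro x hx hx0
    have hmem : C.mulVec x ∈ zeroSet s := hx
    have hCx : C.mulVec x ≠ 0 := by
      intro hzero
      apply hx0
      have := congrArg eqv.symm (show eqv x = 0 from hzero)
      simpa using this
    have key : ∑ i, e i * x i ^ 2 = ∑ i, d i * (C.mulVec x) i ^ 2 := by
      rw [← quadform_diagonal, ← quadform_diagonal, h, quadform_congr]
    rw [key]
    apply Finset.sum_pos'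
    · intro i _
      by_cases hi : 0 < d i
      · exact mul_nonneg hi.le (sq_nonneg _)
      · have : (C.mulVec x) i = 0 := mem_zeroSet.mp hmem i (by simpa [hs] using hi)
        simp [this]
    · obtain ⟨i, hi⟩ := Function.ne_iff.mp hCx
      have hdi : 0 < d i := by
        by_contra hdi
        exact hi (mem_zeroSet.mp hmem i (by simpa [hs] using hdi))
      exact ⟨i, Finset.mem_univ i, mul_pos hdi (pow_two_pos_of_ne_zero hi)⟩
  calc (Finset.univ.filter (fun i => 0 < d i)).card = finrank ℝ P := hdim.symm
    _ ≤ _ := finrank_le_cardPos e P hQ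

lemma cardPos_eq_of_congr (d e : Fin n → ℝ) (C : Matrix (Fin n) (Fin n) ℝ)
    (hC : IsUnit C.det) (h : diagonal e = Cᵀ * diagonal d * C) :
    (Finset.univ.filter (fun i => 0 < e i)).card =
      (Finset.univ.filter (fun i => 0 < d i)).card := by
  refine le_antisymm ?_ (cardPos_le_of_congr d e C hC h)
  refine cardPos_le_of_congr e d C⁻¹ (C.isUnit_nonsing_inv_det hC) ?_
  have hCt : IsUnit Cᵀ.det := by rwa [Matrix.det_transpose]
  rw [Matrix.transpose_nonsing_inv, h]
  have : Cᵀ⁻¹ * (Cᵀ * diagonal d * C) * C⁻¹ = Cᵀ⁻¹ * Cᵀ * diagonal d * (C * C⁻¹) := by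
    simp only [Matrix.mul_assoc]
  rw [this, Matrix.nonsing_inv_mul _ hCt, Matrix.mul_nonsing_inv _ hC, Matrix.one_mul,
    Matrix.mul_one]


lemma cardNeg_eq_of_congr (d e : Fin n → ℝ) (C : Matrix (Fin n) (Fin n) ℝ)
    (hC : IsUnit C.det) (h : diagonal e = Cᵀ * diagonal d * C) :
    (Finset.univ.filter (fun i => e i < 0)).card =
      (Finset.univ.filter (fun i => d i < 0)).card := by
  have h' : diagonal (fun i => -e i) = Cᵀ * diagonal (fun i => -d i) * C := by
    have : diagonal (fun i => -e i) = -diagonal e := by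
      rw [← Matrix.diagonal_neg]
    rw [this, h, ← Matrix.diagonal_neg, Matrix.mul_neg, Matrix.neg_mul]
  have := cardPos_eq_of_congr (fun i => -d i) (fun i => -e i) C hC h'
  have e1 : (Finset.univ.filter (fun i => 0 < -e i)) =
      (Finset.univ.filter (fun i => e i < 0)) :=
    Finset.filter_congr (fun i _ => by simp [neg_pos])
  have e2 : (Finset.univ.filter (fun i => 0 < -d i)) =
      (Finset.univ.filter (fun i => d i < 0)) :=
    Finset.filter_congr (fun i _ => by simp [neg_pos])
  rw [e1, e2] at this
  exact this

/-- `B = D_φ (M - λ I) D_φ` where `D_φ` is the diagonal matrix with diagonal `φ`. -/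
noncomputable def Bmat {n : ℕ} (M : Matrix (Fin n) (Fin n) ℝ) (lam : ℝ) (φ : Fin n → ℝ) :
    Matrix (Fin n) (Fin n) ℝ :=
  Matrix.diagonal φ * (M - lam • (1 : Matrix (Fin n) (Fin n) ℝ)) * Matrix.diagonal φ

theorem stmt3 {n : ℕ} {M : Matrix (Fin n) (Fin n) ℝ} (hM : M.IsHermitian)
    (lam : ℝ) (φ : Fin n → ℝ) (hφ : ∀ i, φ i ≠ 0)
    (heig : M.mulVec φ = lam • φ)
    (k r : ℕ)
    (hk : k = (Finset.univ.filter (fun i => hM.eigenvalues i < lam)).card + 1)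
    (hr : r = (Finset.univ.filter (fun i => hM.eigenvalues i = lam)).card) :
    (∀ i, ∑ j, Bmat M lam φ i j = 0) ∧
    ∃ hB : (Bmat M lam φ).IsHermitian,
      ((Finset.univ.filter (fun i => hB.eigenvalues i < 0)).card : ℤ) = (k : ℤ) - 1 ∧
      ((Finset.univ.filter (fun i => 0 < hB.eigenvalues i)).card : ℤ)
        = (n : ℤ) - k - r + 1 := by
  classical
  set μ : Fin n → ℝ := hM.eigenvalues with hμ
  set A : Matrix (Fin n) (Fin n) ℝ := M - lam • 1 with hAdef
  have hA : A.IsHermitian := by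
    apply hM.sub
    show (lam • (1 : Matrix (Fin n) (Fin n) ℝ))ᴴ = _
    simp
  have hDH : (diagonal φ)ᴴ = diagonal φ := isHermitian_diagonal φ
  have hB : (Bmat M lam φ).IsHermitian := by
    have h := Matrix.isHermitian_mul_mul_conjTranspose (diagonal φ) hA
    rw [hDH] at h
    exact h
  -- row sums
  have hAφ : A.mulVec φ = 0 := by
    rw [hAdef, Matrix.sub_mulVec, heig, Matrix.smul_mulVec, Matrix.one_mulVec, sub_self]
  have hrow : ∀ i, ∑ j, Bmat M lam φ i j = 0 := by
    intro i
    have step : ∀ j, Bmat M lam φ i j = φ i * (A i j * φ j) := by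
      intro j
      rw [Bmat, Matrix.mul_diagonal, Matrix.diagonal_mul, mul_assoc]
    calc ∑ j, Bmat M lam φ i j = φ i * ∑ j, A i j * φ j := by
          rw [Finset.mul_sum]; exact Finset.sum_congr rfl (fun j _ => step j)
      _ = φ i * (A.mulVec φ) i := rfl
      _ = 0 := by rw [hAφ]; simp
  refine ⟨hrow, hB, ?_⟩
  -- spectral decompositions
  set W : Matrix (Fin n) (Fin n) ℝ := (hM.eigenvectorUnitary : Matrix (Fin n) (Fin n) ℝ) with hWdef
  set V : Matrix (Fin n) (Fin n) ℝ := (hB.eigenvectorUnitary : Matrix (Fin n) (Fin n) ℝ) with hVdef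
  set ε : Fin n → ℝ := hB.eigenvalues with hε
  have hWspec : Wᵀ * M * W = diagonal μ := by
    have := hM.conjStarAlgAut_star_eigenvectorUnitary
    rw [Unitary.conjStarAlgAut_star_apply] at this
    rwa [Matrix.star_eq_conjTranspose, Matrix.conjTranspose_eq_transpose_of_trivial,
      RCLike.ofReal_real_eq_id, Function.id_comp] at this
  have hVspec : Vᵀ * Bmat M lam φ * V = diagonal ε := by
    have := hB.conjStarAlgAut_star_eigenvectorUnitary
    rw [Unitary.conjStarAlgAut_star_apply] at this
    rwa [Matrix.star_eq_conjTranspose, Matrix.conjTranspose_eq_transpose_of_trivial,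
      RCLike.ofReal_real_eq_id, Function.id_comp] at this
  have hWW : W * Wᵀ = 1 := by
    have := Unitary.coe_mul_star_self hM.eigenvectorUnitary
    rwa [Unitary.coe_star, Matrix.star_eq_conjTranspose, Matrix.conjTranspose_eq_transpose_of_trivial] at this
  have hWW' : Wᵀ * W = 1 := by
    have := Unitary.coe_star_mul_self hM.eigenvectorUnitary
    rwa [Matrix.star_eq_conjTranspose, Matrix.conjTranspose_eq_transpose_of_trivial] at this
  -- M in terms of diagonal
  have hM' : M = W * diagonal μ * Wᵀ := by
    rw [← hWspec]
    calc M = (W * Wᵀ) * M * (W * Wᵀ) := by rw [hWW, Matrix.one_mul, Matrix.mul_one]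
      _ = W * (Wᵀ * M * W) * Wᵀ := by simp only [Matrix.mul_assoc]
  have hA' : A = W * diagonal (fun i => μ i - lam) * Wᵀ := by
    have hsm : W * (lam • (1 : Matrix (Fin n) (Fin n) ℝ)) * Wᵀ
        = lam • (1 : Matrix (Fin n) (Fin n) ℝ) := by
      rw [Matrix.mul_smul, Matrix.mul_one, Matrix.smul_mul, hWW]
    calc A = W * diagonal μ * Wᵀ - W * (lam • 1) * Wᵀ := by rw [hAdef, ← hM', hsm]
      _ = W * (diagonal μ - lam • 1) * Wᵀ := by
          rw [Matrix.mul_sub, Matrix.sub_mul]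
      _ = W * diagonal (fun i => μ i - lam) * Wᵀ := by
          rw [Matrix.smul_one_eq_diagonal, Matrix.diagonal_sub]
  -- congruence
  set C : Matrix (Fin n) (Fin n) ℝ := Wᵀ * diagonal φ * V with hCdef
  have hCt : Cᵀ = Vᵀ * diagonal φ * W := by
    rw [hCdef, Matrix.transpose_mul, Matrix.transpose_mul, Matrix.diagonal_transpose,
      Matrix.transpose_transpose, Matrix.mul_assoc]
  have hcong : diagonal ε = Cᵀ * diagonal (fun i => μ i - lam) * C := by
    rw [hCt, hCdef, ← hVspec]
    show Vᵀ * Bmat M lam φ * V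
        = Vᵀ * diagonal φ * W * diagonal (fun i => μ i - lam) * (Wᵀ * diagonal φ * V)
    rw [Bmat, ← hAdef, hA']
    simp only [Matrix.mul_assoc]
  -- invertibility
  have hdetW : IsUnit W.det :=
    IsUnit.of_mul_eq_one _ (by rw [← Matrix.det_transpose W, ← Matrix.det_mul, hWW', Matrix.det_one])
  have hdetV : IsUnit V.det := by
    have hVV : Vᵀ * V = 1 := by
      have := Unitary.coe_star_mul_self hB.eigenvectorUnitary
      rwa [Matrix.star_eq_conjTranspose, Matrix.conjTranspose_eq_transpose_of_trivial] at this
    exact IsUnit.of_mul_eq_one _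
      (by rw [← Matrix.det_transpose V, ← Matrix.det_mul, hVV, Matrix.det_one])
  have hdetD : IsUnit (diagonal φ).det := by
    rw [Matrix.det_diagonal]
    exact isUnit_iff_ne_zero.mpr (Finset.prod_ne_zero_iff.mpr (fun i _ => hφ i))
  have hdetC : IsUnit C.det := by
    rw [hCdef, Matrix.det_mul, Matrix.det_mul, Matrix.det_transpose]
    exact (hdetW.mul hdetD).mul hdetV
  -- counting
  have hneg := cardNeg_eq_of_congr (fun i => μ i - lam) ε C hdetC hcong
  have hpos := cardPos_eq_of_congr (fun i => μ i - lam) ε C hdetC hcong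
  have e1 : (Finset.univ.filter (fun i => μ i - lam < 0))
      = (Finset.univ.filter (fun i => μ i < lam)) :=
    Finset.filter_congr (fun i _ => by rw [sub_neg])
  have e2 : (Finset.univ.filter (fun i => 0 < μ i - lam))
      = (Finset.univ.filter (fun i => lam < μ i)) :=
    Finset.filter_congr (fun i _ => by rw [sub_pos])
  rw [e1] at hneg
  rw [e2] at hpos
  -- trichotomy count
  have htri : (Finset.univ.filter (fun i => μ i < lam)).card
      + (Finset.univ.filter (fun i => μ i = lam)).card
      + (Finset.univ.filter (fun i => lam < μ i)).card = n := by
    have h1 := Finset.card_filter_add_card_filter_not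
      (s := Finset.univ) (p := fun i : Fin n => μ i < lam)
    simp only [Finset.card_univ, Fintype.card_fin] at h1
    have h2 : (Finset.univ.filter (fun i : Fin n => ¬ μ i < lam))
        = (Finset.univ.filter (fun i => μ i = lam)) ∪ (Finset.univ.filter (fun i => lam < μ i)) := by
      ext i
      simp only [Finset.mem_filter, Finset.mem_union, Finset.mem_univ, true_and, not_lt]
      constructor
      · intro h
        rcases h.lt_or_eq with h' | h'
        · exact Or.inr h'
        · exact Or.inl h'.symm
      · rintro (h | h)
        · exact h.ge
        · exact h.le
    have h3 : Disjoint (Finset.univ.filter (fun i : Fin n => μ i = lam))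
        (Finset.univ.filter (fun i => lam < μ i)) := by
      rw [Finset.disjoint_left]
      intro i hi1 hi2
      simp only [Finset.mem_filter] at hi1 hi2
      exact absurd (hi1.2 ▸ hi2.2) (lt_irrefl lam)
    rw [h2, Finset.card_union_of_disjoint h3] at h1
    omega
  rw [hneg, hpos]
  rw [hk] at *
  rw [hr] at *
  omega
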